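/- arXiv:1709.04274 — 5 statements merged into one kernel-verified Lean document; each statement's English description precedes it below -/
import Mathlib

section
/- Let a, b ∈ ℝ with |a| + |b| < 1 and let τ, δ > 0. Then every complex root s of the characteristic equation 1 − a·e^{−τs} − b·e^{−(τ+δ)s} = 0 satisfies Re(s) < 0. -/
theorem neutral_delay_robust_stable (a b τ δ : ℝ) (hab : |a| + |b| < 1) (hτ : τ > 0)
    (hδ : δ > 0) (s : ℂ)
    (hs : 1 - (a : ℂ) * Complex.exp (-(τ : ℂ) * s) - (b : ℂ) * Complex.exp (-((τ : ℂ) + δ) * s) = 0) :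
    s.re < 0 := by
  by_contra h
  push_neg at h
  have h1 : (1 : ℂ) = (a : ℂ) * Complex.exp (-(τ : ℂ) * s)
      + (b : ℂ) * Complex.exp (-((τ : ℂ) + δ) * s) := by linear_combination hs
  have e1 : ‖Complex.exp (-(τ : ℂ) * s)‖ ≤ 1 := by
    rw [Complex.norm_exp]
    apply Real.exp_le_one_iff.mpr
    simp only [Complex.neg_re, Complex.mul_re, Complex.ofReal_re, Complex.ofReal_im, Complex.neg_im]
    nlinarith [hτ.le, h]
  have e2 : ‖Complex.exp (-((τ : ℂ) + δ) * s)‖ ≤ 1 := by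
    rw [Complex.norm_exp]
    apply Real.exp_le_one_iff.mpr
    simp only [Complex.neg_re, Complex.mul_re, Complex.add_re, Complex.add_im,
      Complex.ofReal_re, Complex.ofReal_im, Complex.neg_im]
    nlinarith [hτ.le, hδ.le, h]
  have := norm_add_le ((a : ℂ) * Complex.exp (-(τ : ℂ) * s))
      ((b : ℂ) * Complex.exp (-((τ : ℂ) + δ) * s))
  rw [← h1] at this
  simp only [norm_one, norm_mul, Complex.norm_real, Real.norm_eq_abs] at this
  nlinarith [abs_nonneg a, abs_nonneg b,
    norm_nonneg (Complex.exp (-(τ : ℂ) * s)),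
    norm_nonneg (Complex.exp (-((τ : ℂ) + δ) * s))]
end

section
/- Let ρ, q, K ∈ ℝ satisfy |ρq| + |Kq| < 1, and let τ > 0. Then for every δ > 0, all complex roots s of 1 − ρq·e^{−τs} + Kq·e^{−(τ+δ)s} = 0 satisfy Re(s) < 0. -/
theorem modified_controller_delay_robust (ρ q K τ : ℝ) (h : |ρ * q| + |K * q| < 1)
    (hτ : τ > 0) :
    ∀ δ : ℝ, δ > 0 → ∀ s : ℂ,
      1 - (ρ * q : ℂ) * Complex.exp (-(τ : ℂ) * s)
        + (K * q : ℂ) * Complex.exp (-((τ : ℂ) + δ) * s) = 0 → s.re < 0 := by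
  intro δ hδ s heq
  by_contra hre
  push_neg at hre
  have h1 : (1 : ℂ) = (ρ * q : ℂ) * Complex.exp (-(τ : ℂ) * s)
      - (K * q : ℂ) * Complex.exp (-((τ : ℂ) + δ) * s) := by linear_combination heq
  have e1 : ‖Complex.exp (-(τ : ℂ) * s)‖ ≤ 1 := by
    rw [Complex.norm_exp]
    apply Real.exp_le_one_iff.2
    simp [Complex.mul_re]
    nlinarith
  have e2 : ‖Complex.exp (-((τ : ℂ) + δ) * s)‖ ≤ 1 := by
    rw [Complex.norm_exp]
    apply Real.exp_le_one_iff.2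
    simp [Complex.mul_re, Complex.add_re]
    nlinarith
  have := congrArg (‖·‖) h1
  simp only [norm_one] at this
  have hle : ‖(ρ * q : ℂ) * Complex.exp (-(τ : ℂ) * s)
      - (K * q : ℂ) * Complex.exp (-((τ : ℂ) + δ) * s)‖ ≤ |ρ * q| + |K * q| := by
    calc _ ≤ ‖(ρ * q : ℂ) * Complex.exp (-(τ : ℂ) * s)‖
          + ‖(K * q : ℂ) * Complex.exp (-((τ : ℂ) + δ) * s)‖ :=
        norm_sub_le _ _
      _ ≤ |ρ * q| + |K * q| := by
        simp only [norm_mul, Complex.norm_real, Real.norm_eq_abs, ← abs_mul]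
        have := mul_le_of_le_one_right (abs_nonneg (ρ * q)) e1
        have := mul_le_of_le_one_right (abs_nonneg (K * q)) e2
        linarith
  linarith [this ▸ hle]
end

section
/- Let τ > 0, let N ∈ L¹([0,τ], ℝ), and let ε₀ > 0. Then there exists δ₀ > 0 such that for all δ with 0 < δ ≤ δ₀ and all s ∈ ℂ with Re(s) ≥ 0, one has |∫₀^τ N(ξ)·(e^{−ξs} − e^{−(ξ+δ)s}) dξ| < ε₀. -/
open MeasureTheory

theorem perturbation_uniform_small (τ : ℝ) (hτ : τ > 0) (N : ℝ → ℝ)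
    (hN : IntegrableOn N (Set.Icc 0 τ)) (ε₀ : ℝ) (hε₀ : ε₀ > 0) :
    ∃ δ₀ > 0, ∀ δ : ℝ, 0 < δ → δ ≤ δ₀ → ∀ s : ℂ, 0 ≤ s.re →
      ‖∫ ξ in Set.Icc (0:ℝ) τ,
        (N ξ : ℂ) * (Complex.exp (-(ξ : ℂ) * s) - Complex.exp (-((ξ : ℂ) + δ) * s))‖ < ε₀ := by
  classical
  set f : ℝ → ℝ := (Set.Icc (0:ℝ) τ).indicator N with hf_def
  have hf_int : Integrable f := (integrable_indicator_iff measurableSet_Icc).mpr hN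
  obtain ⟨g, hg_supp, hg_close, hg_cont, hg_int⟩ :=
    hf_int.exists_hasCompactSupport_integral_sub_le (ε := ε₀/8) (by positivity)
  obtain ⟨M, hM⟩ := hg_cont.bounded_above_of_compact_support hg_supp
  have hM0 : 0 ≤ M := le_trans (norm_nonneg (g 0)) (hM 0)
  obtain ⟨η, hη, hη2⟩ := Metric.uniformContinuous_iff.mp
    (hg_supp.uniformContinuous_of_continuous hg_cont) (ε₀/(8*τ)) (by positivity)
  refine ⟨min (τ/2) (min (η/2) (ε₀/(16*(M+1)))), by positivity, ?_⟩
  intro δ hδ0 hδle s hs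
  have hδτ : δ ≤ τ := hδle.trans ((min_le_left _ _).trans (by linarith))
  have hδη : δ < η := lt_of_le_of_lt (hδle.trans ((min_le_right _ _).trans (min_le_left _ _)))
    (by linarith)
  have hδM : δ ≤ ε₀/(16*(M+1)) := hδle.trans ((min_le_right _ _).trans (min_le_right _ _))
  set E : ℝ → ℂ := fun x => Complex.exp (-(x:ℂ) * s) with hE_def
  have hE_cont : Continuous E := by fun_prop
  have hE_bd : ∀ x : ℝ, 0 ≤ x → ‖E x‖ ≤ 1 := by
    intro x hx
    rw [hE_def]
    simp only [Complex.norm_exp]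
    have : (-(x:ℂ) * s).re = -(x * s.re) := by simp
    rw [this]
    exact Real.exp_le_one_iff.mpr (by nlinarith)
  set c : ℝ → ℂ := fun x => E x - E (x + δ) with hc_def
  have hc_cont : Continuous c := by fun_prop
  have hc_bd : ∀ x : ℝ, 0 ≤ x → ‖c x‖ ≤ 2 := by
    intro x hx
    calc ‖E x - E (x+δ)‖ ≤ ‖E x‖ + ‖E (x+δ)‖ := norm_sub_le _ _
    _ ≤ 1 + 1 := add_le_add (hE_bd x hx) (hE_bd _ (by linarith))
    _ = 2 := by norm_num
  -- rewrite the target integrand using c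
  have hrw : ∀ ξ : ℝ, (N ξ : ℂ) * (Complex.exp (-(ξ : ℂ) * s) -
      Complex.exp (-((ξ : ℂ) + δ) * s)) = (N ξ : ℂ) * c ξ := by
    intro ξ
    simp only [hc_def, hE_def]
    push_cast
    ring_nf
  have hIcc : (∫ ξ in Set.Icc (0:ℝ) τ,
      (N ξ : ℂ) * (Complex.exp (-(ξ : ℂ) * s) - Complex.exp (-((ξ : ℂ) + δ) * s)))
      = ∫ ξ in (0:ℝ)..τ, (N ξ : ℂ) * c ξ := by
    rw [intervalIntegral.integral_of_le hτ.le, ← integral_Icc_eq_integral_Ioc]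
    exact setIntegral_congr_fun measurableSet_Icc (fun ξ _ => hrw ξ)
  rw [hIcc]
  -- integrability
  have hNC : IntegrableOn (fun ξ => (N ξ:ℂ)) (Set.Icc (0:ℝ) τ) := hN.ofReal
  have hNcOn : IntegrableOn (fun ξ => (N ξ:ℂ) * c ξ) (Set.Icc (0:ℝ) τ) :=
    hNC.mul_continuousOn hc_cont.continuousOn isCompact_Icc
  have hNc : IntervalIntegrable (fun ξ => (N ξ:ℂ) * c ξ) volume 0 τ := by
    rw [← Set.uIcc_of_le hτ.le] at hNcOn
    exact hNcOn.intervalIntegrable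
  have hgc : IntervalIntegrable (fun ξ => (g ξ:ℂ) * c ξ) volume 0 τ :=
    Continuous.intervalIntegrable (by fun_prop) 0 τ
  have hfun : (fun ξ => ((N ξ - g ξ:ℝ):ℂ) * c ξ)
      = fun ξ => (N ξ:ℂ) * c ξ - (g ξ:ℂ) * c ξ := by
    funext ξ; push_cast; ring
  have hdiff : IntervalIntegrable (fun ξ => ((N ξ - g ξ:ℝ):ℂ) * c ξ) volume 0 τ := by
    rw [hfun]; exact hNc.sub hgc
  have hsplit : (∫ ξ in (0:ℝ)..τ, (N ξ:ℂ) * c ξ)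
      = (∫ ξ in (0:ℝ)..τ, ((N ξ - g ξ:ℝ):ℂ) * c ξ) + ∫ ξ in (0:ℝ)..τ, (g ξ:ℂ) * c ξ := by
    rw [← intervalIntegral.integral_add hdiff hgc]
    apply intervalIntegral.integral_congr
    intro ξ _; push_cast; ring
  -- first term bound
  have hterm1 : ‖∫ ξ in (0:ℝ)..τ, ((N ξ - g ξ:ℝ):ℂ) * c ξ‖ ≤ ε₀/4 := by
    have h1 : ‖∫ ξ in (0:ℝ)..τ, ((N ξ - g ξ:ℝ):ℂ) * c ξ‖
        ≤ ∫ ξ in (0:ℝ)..τ, ‖((N ξ - g ξ:ℝ):ℂ) * c ξ‖ :=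
      intervalIntegral.norm_integral_le_integral_norm hτ.le
    have habs : IntervalIntegrable (fun ξ => 2 * ‖N ξ - g ξ‖) volume 0 τ := by
      have : IntegrableOn (fun ξ => 2 * ‖N ξ - g ξ‖) (Set.uIcc (0:ℝ) τ) := by
        rw [Set.uIcc_of_le hτ.le]
        exact ((hN.sub hg_int.integrableOn).norm.const_mul 2)
      exact this.intervalIntegrable
    have h2 : (∫ ξ in (0:ℝ)..τ, ‖((N ξ - g ξ:ℝ):ℂ) * c ξ‖)
        ≤ ∫ ξ in (0:ℝ)..τ, 2 * ‖N ξ - g ξ‖ := by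
      apply intervalIntegral.integral_mono_on hτ.le hdiff.norm habs
      intro ξ hξ
      have hξ0 : 0 ≤ ξ := hξ.1
      calc ‖((N ξ - g ξ:ℝ):ℂ) * c ξ‖ = ‖N ξ - g ξ‖ * ‖c ξ‖ := by
            rw [norm_mul, Complex.norm_real]
      _ ≤ ‖N ξ - g ξ‖ * 2 := mul_le_mul_of_nonneg_left (hc_bd ξ hξ0) (norm_nonneg _)
      _ = 2 * ‖N ξ - g ξ‖ := mul_comm _ _
    have h3 : (∫ ξ in (0:ℝ)..τ, 2 * ‖N ξ - g ξ‖) = 2 * ∫ ξ in (0:ℝ)..τ, ‖N ξ - g ξ‖ :=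
      intervalIntegral.integral_const_mul 2 _
    have h4 : (∫ ξ in (0:ℝ)..τ, ‖N ξ - g ξ‖) ≤ ∫ x : ℝ, ‖f x - g x‖ := by
      rw [intervalIntegral.integral_of_le hτ.le]
      have heq : (∫ ξ in Set.Ioc (0:ℝ) τ, ‖N ξ - g ξ‖)
          = ∫ ξ in Set.Ioc (0:ℝ) τ, ‖f ξ - g ξ‖ := by
        apply setIntegral_congr_fun measurableSet_Ioc
        intro ξ hξ
        simp only [hf_def, Set.indicator_of_mem (Set.Ioc_subset_Icc_self hξ)]
      rw [heq]
      exact setIntegral_le_integral (hf_int.sub hg_int).norm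
        (Filter.Eventually.of_forall fun x => norm_nonneg _)
    calc ‖∫ ξ in (0:ℝ)..τ, ((N ξ - g ξ:ℝ):ℂ) * c ξ‖
        ≤ ∫ ξ in (0:ℝ)..τ, 2 * ‖N ξ - g ξ‖ := h1.trans h2
    _ = 2 * ∫ ξ in (0:ℝ)..τ, ‖N ξ - g ξ‖ := h3
    _ ≤ 2 * (ε₀/8) := by
        have := h4.trans hg_close
        linarith
    _ = ε₀/4 := by ring
  -- second term via shift
  have hshift : (∫ ξ in (0:ℝ)..τ, (g ξ:ℂ) * E (ξ + δ))
      = ∫ u in δ..(τ+δ), (g (u - δ):ℂ) * E u := by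
    have h := intervalIntegral.integral_comp_add_right (a := 0) (b := τ)
      (fun u => (g (u - δ):ℂ) * E u) δ
    simp only [add_sub_cancel_right, zero_add] at h
    exact h
  have i1 : ∀ (a b : ℝ), IntervalIntegrable (fun ξ => (g ξ:ℂ) * E ξ) volume a b :=
    fun a b => Continuous.intervalIntegrable (by fun_prop) a b
  have i2 : ∀ (a b : ℝ), IntervalIntegrable (fun ξ => (g (ξ - δ):ℂ) * E ξ) volume a b :=
    fun a b => Continuous.intervalIntegrable (by fun_prop) a b
  have hgcsplit : (∫ ξ in (0:ℝ)..τ, (g ξ:ℂ) * c ξ)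
      = (∫ ξ in (0:ℝ)..δ, (g ξ:ℂ) * E ξ)
        + (∫ ξ in δ..τ, ((g ξ:ℂ) - (g (ξ - δ):ℂ)) * E ξ)
        - ∫ ξ in τ..(τ+δ), (g (ξ - δ):ℂ) * E ξ := by
    have e1 : (∫ ξ in (0:ℝ)..τ, (g ξ:ℂ) * c ξ)
        = (∫ ξ in (0:ℝ)..τ, (g ξ:ℂ) * E ξ) - ∫ ξ in (0:ℝ)..τ, (g ξ:ℂ) * E (ξ + δ) := by
      rw [← intervalIntegral.integral_sub (i1 0 τ)
        (Continuous.intervalIntegrable (by fun_prop) 0 τ)]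
      apply intervalIntegral.integral_congr
      intro ξ _; simp only [hc_def]; ring
    rw [e1, hshift]
    have e2 : (∫ ξ in (0:ℝ)..τ, (g ξ:ℂ) * E ξ)
        = (∫ ξ in (0:ℝ)..δ, (g ξ:ℂ) * E ξ) + ∫ ξ in δ..τ, (g ξ:ℂ) * E ξ :=
      (intervalIntegral.integral_add_adjacent_intervals (i1 0 δ) (i1 δ τ)).symm
    have e3 : (∫ u in δ..(τ+δ), (g (u - δ):ℂ) * E u)
        = (∫ u in δ..τ, (g (u - δ):ℂ) * E u) + ∫ u in τ..(τ+δ), (g (u - δ):ℂ) * E u :=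
      (intervalIntegral.integral_add_adjacent_intervals (i2 δ τ) (i2 τ (τ+δ))).symm
    have e4 : (∫ ξ in δ..τ, ((g ξ:ℂ) - (g (ξ - δ):ℂ)) * E ξ)
        = (∫ ξ in δ..τ, (g ξ:ℂ) * E ξ) - ∫ ξ in δ..τ, (g (ξ - δ):ℂ) * E ξ := by
      rw [← intervalIntegral.integral_sub (i1 δ τ) (i2 δ τ)]
      apply intervalIntegral.integral_congr
      intro ξ _; ring
    rw [e2, e3, e4]; ring
  have hMδ : M * δ ≤ ε₀/16 := by
    have h1 : M * δ ≤ M * (ε₀/(16*(M+1))) := mul_le_mul_of_nonneg_left hδM hM0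
    have h2 : M * (ε₀/(16*(M+1))) ≤ ε₀/16 := by
      rw [show M * (ε₀/(16*(M+1))) = (M*ε₀)/(16*(M+1)) by ring,
        div_le_div_iff₀ (by positivity) (by norm_num : (0:ℝ) < 16)]
      nlinarith
    linarith
  have b1 : ‖∫ ξ in (0:ℝ)..δ, (g ξ:ℂ) * E ξ‖ ≤ ε₀/16 := by
    have h := intervalIntegral.norm_integral_le_of_norm_le_const (C := M)
      (f := fun ξ => (g ξ:ℂ) * E ξ) (a := (0:ℝ)) (b := δ) ?_
    · rw [abs_of_nonneg (by linarith : (0:ℝ) ≤ δ - 0)] at h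
      calc ‖∫ ξ in (0:ℝ)..δ, (g ξ:ℂ) * E ξ‖ ≤ M * (δ - 0) := h
      _ = M * δ := by ring
      _ ≤ ε₀/16 := hMδ
    · intro x hx
      rw [Set.uIoc_of_le hδ0.le] at hx
      calc ‖(g x:ℂ) * E x‖ = ‖g x‖ * ‖E x‖ := by rw [norm_mul, Complex.norm_real]
      _ ≤ M * 1 := mul_le_mul (hM x) (hE_bd x hx.1.le) (norm_nonneg _) hM0
      _ = M := mul_one M
  have b3 : ‖∫ ξ in τ..(τ+δ), (g (ξ - δ):ℂ) * E ξ‖ ≤ ε₀/16 := by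
    have h := intervalIntegral.norm_integral_le_of_norm_le_const (C := M)
      (f := fun ξ => (g (ξ - δ):ℂ) * E ξ) (a := τ) (b := τ+δ) ?_
    · rw [abs_of_nonneg (by linarith : (0:ℝ) ≤ τ + δ - τ)] at h
      calc ‖∫ ξ in τ..(τ+δ), (g (ξ - δ):ℂ) * E ξ‖ ≤ M * (τ + δ - τ) := h
      _ = M * δ := by ring
      _ ≤ ε₀/16 := hMδ
    · intro x hx
      rw [Set.uIoc_of_le (by linarith : τ ≤ τ + δ)] at hx
      have hx0 : 0 ≤ x := by linarith [hx.1]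
      calc ‖(g (x - δ):ℂ) * E x‖ = ‖g (x - δ)‖ * ‖E x‖ := by rw [norm_mul, Complex.norm_real]
      _ ≤ M * 1 := mul_le_mul (hM _) (hE_bd x hx0) (norm_nonneg _) hM0
      _ = M := mul_one M
  have b2 : ‖∫ ξ in δ..τ, ((g ξ:ℂ) - (g (ξ - δ):ℂ)) * E ξ‖ ≤ ε₀/8 := by
    have h := intervalIntegral.norm_integral_le_of_norm_le_const (C := ε₀/(8*τ))
      (f := fun ξ => ((g ξ:ℂ) - (g (ξ - δ):ℂ)) * E ξ) (a := δ) (b := τ) ?_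
    · rw [abs_of_nonneg (by linarith : (0:ℝ) ≤ τ - δ)] at h
      calc ‖∫ ξ in δ..τ, ((g ξ:ℂ) - (g (ξ - δ):ℂ)) * E ξ‖ ≤ ε₀/(8*τ) * (τ - δ) := h
      _ ≤ ε₀/(8*τ) * τ := by
          apply mul_le_mul_of_nonneg_left (by linarith) (by positivity)
      _ = ε₀/8 := by field_simp
    · intro x hx
      rw [Set.uIoc_of_le hδτ] at hx
      have hx0 : 0 ≤ x := by linarith [hx.1]
      have hdist : dist x (x - δ) < η := by
        rw [Real.dist_eq, abs_of_nonneg (by linarith : (0:ℝ) ≤ x - (x - δ))]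
        linarith
      have hg2 : ‖g x - g (x - δ)‖ ≤ ε₀/(8*τ) := by
        have := hη2 hdist
        rw [Real.dist_eq] at this
        exact le_of_lt this
      calc ‖((g x:ℂ) - (g (x - δ):ℂ)) * E x‖ = ‖g x - g (x - δ)‖ * ‖E x‖ := by
            rw [norm_mul]
            congr 1
            rw [show ((g x:ℂ) - (g (x - δ):ℂ)) = ((g x - g (x - δ) : ℝ):ℂ) by push_cast; ring,
              Complex.norm_real]
      _ ≤ ε₀/(8*τ) * 1 := mul_le_mul hg2 (hE_bd x hx0) (norm_nonneg _) (by positivity)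
      _ = ε₀/(8*τ) := mul_one _
  have hterm2 : ‖∫ ξ in (0:ℝ)..τ, (g ξ:ℂ) * c ξ‖ ≤ ε₀/4 := by
    rw [hgcsplit]
    calc ‖_ + _ - _‖ ≤ ‖(∫ ξ in (0:ℝ)..δ, (g ξ:ℂ) * E ξ)
          + ∫ ξ in δ..τ, ((g ξ:ℂ) - (g (ξ - δ):ℂ)) * E ξ‖
          + ‖∫ ξ in τ..(τ+δ), (g (ξ - δ):ℂ) * E ξ‖ := norm_sub_le _ _
    _ ≤ (‖∫ ξ in (0:ℝ)..δ, (g ξ:ℂ) * E ξ‖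
          + ‖∫ ξ in δ..τ, ((g ξ:ℂ) - (g (ξ - δ):ℂ)) * E ξ‖)
          + ‖∫ ξ in τ..(τ+δ), (g (ξ - δ):ℂ) * E ξ‖ := by
        gcongr
        exact norm_add_le _ _
    _ ≤ (ε₀/16 + ε₀/8) + ε₀/16 := by gcongr
    _ = ε₀/4 := by ring
  rw [hsplit]
  calc ‖_ + _‖ ≤ ‖∫ ξ in (0:ℝ)..τ, ((N ξ - g ξ:ℝ):ℂ) * c ξ‖
        + ‖∫ ξ in (0:ℝ)..τ, (g ξ:ℂ) * c ξ‖ := norm_add_le _ _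
  _ ≤ ε₀/4 + ε₀/4 := add_le_add hterm1 hterm2
  _ < ε₀ := by linarith
end

section
/- Let ρ, q, K ∈ ℝ with |ρq| + |Kq| < 1, let τ > 0, and let N ∈ L¹([0,τ], ℝ). Then there exists δ₀ > 0 such that for all 0 < δ ≤ δ₀, the function F(s) = 1 − ρq·e^{−τs} + Kq·e^{−(τ+δ)s} − ∫₀^τ N(ξ)(e^{−ξs} − e^{−(ξ+δ)s}) dξ satisfies |F(s)| > 0 for all s ∈ ℂ with Re(s) ≥ 0. -/
open MeasureTheory Filter

-- continuity of translation in L¹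
lemma translate_L1_small (f : ℝ → ℝ) (hf : Integrable f) {ε : ℝ} (hε : 0 < ε) :
    ∃ δ₀ > 0, ∀ δ : ℝ, |δ| ≤ δ₀ → (∫ ξ : ℝ, |f ξ - f (ξ - δ)|) < ε := by
  obtain ⟨g, hgsupp, hgapprox, hgcont, hgint⟩ :=
    hf.exists_hasCompactSupport_integral_sub_le (by positivity : (0:ℝ) < ε/4)
  obtain ⟨C, hC⟩ := hgsupp.exists_bound_of_continuous hgcont
  obtain ⟨R, hR⟩ := hgsupp.isCompact.isBounded.subset_closedBall 0
  have hgz : ∀ x : ℝ, R + 1 < |x| → g x = 0 := by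
    intro x hx
    apply image_eq_zero_of_notMem_tsupport
    intro hmem
    have := hR hmem
    simp only [Metric.mem_closedBall, Real.dist_eq, sub_zero] at this
    linarith
  have hC0 : 0 ≤ C := le_trans (norm_nonneg _) (hC 0)
  -- the translation modulus of g tends to 0
  have htend : Tendsto (fun δ : ℝ => ∫ ξ : ℝ, |g ξ - g (ξ - δ)|) (nhds 0)
      (nhds (∫ _ : ℝ, (0:ℝ))) := by
    apply tendsto_integral_filter_of_dominated_convergence
      ((Set.Icc (-(R+2)) (R+2)).indicator (fun _ => 2*C))
    · filter_upwards with δ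
      exact ((hgcont.sub (hgcont.comp (continuous_id.sub continuous_const))).abs).aestronglyMeasurable
    · have h1 : ∀ᶠ δ : ℝ in nhds 0, |δ| ≤ 1 := by
        have := Metric.closedBall_mem_nhds (0:ℝ) one_pos
        filter_upwards [this] with δ hδ
        simpa [Real.dist_eq] using hδ
      filter_upwards [h1] with δ hδ
      filter_upwards with ξ
      simp only [Real.norm_eq_abs, abs_abs]
      rcases le_or_gt |ξ| (R+2) with hball | hball
      · have hmem : ξ ∈ Set.Icc (-(R+2)) (R+2) := abs_le.mp hball
        rw [Set.indicator_of_mem hmem]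
        have := hC ξ
        have := hC (ξ - δ)
        simp only [Real.norm_eq_abs] at *
        calc |g ξ - g (ξ - δ)| ≤ |g ξ| + |g (ξ - δ)| := abs_sub _ _
          _ ≤ 2*C := by linarith
      · have hmem : ξ ∉ Set.Icc (-(R+2)) (R+2) := by
          rw [Set.mem_Icc, ← abs_le]; exact not_le.mpr hball
        rw [Set.indicator_of_notMem hmem]
        have h1 : g ξ = 0 := hgz ξ (by linarith)
        have h2 : g (ξ - δ) = 0 := by
          apply hgz
          have := abs_sub_abs_le_abs_sub ξ δ
          have hd : |δ| ≤ 1 := hδ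
          linarith
        simp [h1, h2]
    · apply IntegrableOn.integrable_indicator _ measurableSet_Icc
      exact integrableOn_const measure_Icc_lt_top.ne
    · filter_upwards with ξ
      have h1 : Tendsto (fun δ : ℝ => ξ - δ) (nhds 0) (nhds ξ) := by
        simpa using tendsto_const_nhds.sub (tendsto_id (x := nhds (0:ℝ)))
      have h2 : Tendsto (fun δ : ℝ => g (ξ - δ)) (nhds 0) (nhds (g ξ)) :=
        (hgcont.continuousAt).tendsto.comp h1
      have h3 := (tendsto_const_nhds (x := g ξ)).sub h2
      simpa using h3.abs
  rw [integral_zero] at htend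
  have hev : ∀ᶠ δ : ℝ in nhds 0, (∫ ξ : ℝ, |g ξ - g (ξ - δ)|) < ε/4 :=
    htend.eventually_lt_const (by positivity)
  rw [Metric.eventually_nhds_iff] at hev
  obtain ⟨r, hr, hrp⟩ := hev
  refine ⟨r/2, by positivity, fun δ hδ => ?_⟩
  have hgδ : (∫ ξ : ℝ, |g ξ - g (ξ - δ)|) < ε/4 := by
    apply hrp
    rw [Real.dist_eq, sub_zero]
    linarith
  -- integrabilities
  have ifg : Integrable (fun ξ : ℝ => |f ξ - g ξ|) := (hf.sub hgint).abs
  have igg : Integrable (fun ξ : ℝ => |g ξ - g (ξ - δ)|) :=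
    (hgint.sub (hgint.comp_sub_right δ)).abs
  have igf : Integrable (fun ξ : ℝ => |g (ξ - δ) - f (ξ - δ)|) :=
    ((hgint.sub hf).abs).comp_sub_right δ
  have iff' : Integrable (fun ξ : ℝ => |f ξ - f (ξ - δ)|) :=
    (hf.sub (hf.comp_sub_right δ)).abs
  have key : (∫ ξ : ℝ, |f ξ - f (ξ - δ)|)
      ≤ ∫ ξ : ℝ, (|f ξ - g ξ| + |g ξ - g (ξ - δ)| + |g (ξ - δ) - f (ξ - δ)|) := by
    apply integral_mono iff' ((ifg.add igg).add igf)
    intro ξ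
    calc |f ξ - f (ξ - δ)| ≤ |f ξ - g (ξ - δ)| + |g (ξ - δ) - f (ξ - δ)| := abs_sub_le _ _ _
      _ ≤ (|f ξ - g ξ| + |g ξ - g (ξ - δ)|) + |g (ξ - δ) - f (ξ - δ)| := by
          have := abs_sub_le (f ξ) (g ξ) (g (ξ - δ)); linarith
  have i12 : Integrable (fun ξ : ℝ => |f ξ - g ξ| + |g ξ - g (ξ - δ)|) := ifg.add igg
  rw [integral_add i12 igf, integral_add ifg igg] at key
  have e3 : (∫ ξ : ℝ, |g (ξ - δ) - f (ξ - δ)|) = ∫ ξ : ℝ, |g ξ - f ξ| :=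
    integral_sub_right_eq_self (fun ξ => |g ξ - f ξ|) δ
  have e4 : (∫ ξ : ℝ, |g ξ - f ξ|) = ∫ ξ : ℝ, |f ξ - g ξ| := by
    congr 1; funext ξ; rw [abs_sub_comm]
  have e5 : (∫ ξ : ℝ, |f ξ - g ξ|) ≤ ε/4 := by
    simpa [Real.norm_eq_abs] using hgapprox
  rw [e3, e4] at key
  linarith

-- norm bound for exponential-weighted integrands
lemma aux_norm_bound {h : ℝ → ℝ} (h0 : ∀ ξ : ℝ, ξ < 0 → h ξ = 0) {s : ℂ} (hs : 0 ≤ s.re)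
    {a : ℝ} (ha : 0 ≤ a) (ξ : ℝ) :
    ‖(h ξ : ℂ) * Complex.exp (-((ξ:ℂ) + (a:ℂ)) * s)‖ ≤ |h ξ| := by
  rcases lt_or_ge ξ 0 with hξ | hξ
  · simp [h0 ξ hξ]
  · rw [norm_mul, Complex.norm_real, Real.norm_eq_abs,
      Complex.norm_exp]
    have hre : (-((ξ:ℂ) + (a:ℂ)) * s).re = -((ξ + a) * s.re) := by
      simp [Complex.mul_re]; ring
    rw [hre]
    have : Real.exp (-((ξ + a) * s.re)) ≤ 1 := by
      rw [Real.exp_le_one_iff]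
      have : 0 ≤ (ξ + a) * s.re := mul_nonneg (by linarith) hs
      linarith
    nlinarith [abs_nonneg (h ξ), Real.exp_pos (-((ξ + a) * s.re))]

lemma aux_integrable {h : ℝ → ℝ} (hh : Integrable h) (h0 : ∀ ξ : ℝ, ξ < 0 → h ξ = 0)
    {s : ℂ} (hs : 0 ≤ s.re) {a : ℝ} (ha : 0 ≤ a) :
    Integrable (fun ξ : ℝ => (h ξ : ℂ) * Complex.exp (-((ξ:ℂ) + (a:ℂ)) * s)) := by
  apply Integrable.mono' hh.abs
  · exact (Complex.continuous_ofReal.comp_aestronglyMeasurable hh.1).mul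
      ((Complex.continuous_exp.comp (by continuity)).aestronglyMeasurable)
  · filter_upwards with ξ
    exact aux_norm_bound h0 hs ha ξ

theorem closed_loop_delay_robust (ρ q K τ : ℝ) (h : |ρ * q| + |K * q| < 1) (hτ : τ > 0)
    (N : ℝ → ℝ) (hN : IntegrableOn N (Set.Icc 0 τ)) :
    ∃ δ₀ > 0, ∀ δ : ℝ, 0 < δ → δ ≤ δ₀ → ∀ s : ℂ, 0 ≤ s.re →
      0 < ‖1 - (ρ * q : ℂ) * Complex.exp (-(τ : ℂ) * s)
          + (K * q : ℂ) * Complex.exp (-((τ : ℂ) + δ) * s)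
          - ∫ ξ in Set.Icc (0:ℝ) τ,
              (N ξ : ℂ) * (Complex.exp (-(ξ : ℂ) * s) - Complex.exp (-((ξ : ℂ) + δ) * s))‖ := by
  set Nt : ℝ → ℝ := (Set.Icc (0:ℝ) τ).indicator N with hNt_def
  have hNt : Integrable Nt := (integrable_indicator_iff measurableSet_Icc).mpr hN
  have hNt0 : ∀ ξ : ℝ, ξ < 0 → Nt ξ = 0 := by
    intro ξ hξ
    apply Set.indicator_of_notMem
    simp only [Set.mem_Icc, not_and_or, not_le]
    exact Or.inl hξ
  set c : ℝ := 1 - (|ρ * q| + |K * q|) with hc_def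
  have hc : 0 < c := by simp only [hc_def]; linarith
  obtain ⟨δ₀, hδ₀pos, hδ₀⟩ := translate_L1_small Nt hNt hc
  refine ⟨δ₀, hδ₀pos, fun δ hδpos hδle s hs => ?_⟩
  set D := ∫ ξ : ℝ, |Nt ξ - Nt (ξ - δ)| with hD_def
  have hD : D < c := hδ₀ δ (by rw [abs_of_pos hδpos]; exact hδle)
  have hdiff0 : ∀ ξ : ℝ, ξ < 0 → Nt ξ - Nt (ξ - δ) = 0 := by
    intro ξ hξ
    rw [hNt0 ξ hξ, hNt0 (ξ - δ) (by linarith), sub_zero]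
  -- integrability
  have hint1 : Integrable (fun ξ : ℝ => (Nt ξ : ℂ) * Complex.exp (-(ξ:ℂ) * s)) := by
    have := aux_integrable hNt hNt0 hs (le_refl (0:ℝ))
    simpa using this
  have hint2 : Integrable (fun ξ : ℝ => (Nt ξ : ℂ) * Complex.exp (-((ξ:ℂ) + (δ:ℂ)) * s)) :=
    aux_integrable hNt hNt0 hs hδpos.le
  have hNtr : Integrable (fun ξ : ℝ => Nt (ξ - δ)) := hNt.comp_sub_right δ
  have hNtr0 : ∀ ξ : ℝ, ξ < 0 → Nt (ξ - δ) = 0 := fun ξ hξ => hNt0 _ (by linarith)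
  have hint1' : Integrable (fun ξ : ℝ => (Nt (ξ - δ) : ℂ) * Complex.exp (-(ξ:ℂ) * s)) := by
    have := aux_integrable hNtr hNtr0 hs (le_refl (0:ℝ))
    simpa using this
  -- rewrite the integral over Icc as an integral over ℝ
  have step1 : (∫ ξ in Set.Icc (0:ℝ) τ,
        (N ξ : ℂ) * (Complex.exp (-(ξ : ℂ) * s) - Complex.exp (-((ξ : ℂ) + δ) * s)))
      = ∫ ξ : ℝ, (Nt ξ : ℂ) * (Complex.exp (-(ξ:ℂ) * s) - Complex.exp (-((ξ:ℂ) + (δ:ℂ)) * s)) := by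
    rw [← integral_indicator measurableSet_Icc]
    congr 1
    funext ξ
    by_cases hmem : ξ ∈ Set.Icc (0:ℝ) τ
    · simp [Set.indicator_of_mem hmem, hNt_def]
    · simp [Set.indicator_of_notMem hmem, hNt_def]
  have step2 : (∫ ξ : ℝ, (Nt ξ : ℂ) * (Complex.exp (-(ξ:ℂ) * s) - Complex.exp (-((ξ:ℂ) + (δ:ℂ)) * s)))
      = (∫ ξ : ℝ, (Nt ξ : ℂ) * Complex.exp (-(ξ:ℂ) * s))
        - ∫ ξ : ℝ, (Nt ξ : ℂ) * Complex.exp (-((ξ:ℂ) + (δ:ℂ)) * s) := by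
    simp_rw [mul_sub]
    exact integral_sub hint1 hint2
  have step3 : (∫ ξ : ℝ, (Nt ξ : ℂ) * Complex.exp (-((ξ:ℂ) + (δ:ℂ)) * s))
      = ∫ ξ : ℝ, (Nt (ξ - δ) : ℂ) * Complex.exp (-(ξ:ℂ) * s) := by
    have heq := integral_add_right_eq_self (μ := volume)
      (fun ξ : ℝ => (Nt (ξ - δ) : ℂ) * Complex.exp (-(ξ:ℂ) * s)) δ
    rw [← heq]
    congr 1
    funext ξ
    have h1 : ξ + δ - δ = ξ := by ring
    rw [h1]
    push_cast
    ring_nf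
  have step4 : (∫ ξ : ℝ, (Nt ξ : ℂ) * Complex.exp (-(ξ:ℂ) * s))
        - (∫ ξ : ℝ, (Nt (ξ - δ) : ℂ) * Complex.exp (-(ξ:ℂ) * s))
      = ∫ ξ : ℝ, ((Nt ξ - Nt (ξ - δ) : ℝ) : ℂ) * Complex.exp (-(ξ:ℂ) * s) := by
    rw [← integral_sub hint1 hint1']
    congr 1
    funext ξ
    push_cast
    ring
  have hIbound : ‖∫ ξ : ℝ, ((Nt ξ - Nt (ξ - δ) : ℝ) : ℂ) * Complex.exp (-(ξ:ℂ) * s)‖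
      ≤ D := by
    refine norm_integral_le_of_norm_le ((hNt.sub hNtr).abs) ?_
    filter_upwards with ξ
    simpa using aux_norm_bound hdiff0 hs (le_refl (0:ℝ)) ξ
  -- bounds on the other terms
  have habsA : ‖(ρ * q : ℂ) * Complex.exp (-(τ : ℂ) * s)‖ ≤ |ρ * q| := by
    rw [norm_mul]
    have h1 : ‖(ρ * q : ℂ)‖ = |ρ * q| := by
      rw [show ((ρ : ℂ) * q) = ((ρ * q : ℝ) : ℂ) by push_cast; ring, Complex.norm_real, Real.norm_eq_abs]
    have h2 : ‖Complex.exp (-(τ : ℂ) * s)‖ ≤ 1 := by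
      rw [Complex.norm_exp, Real.exp_le_one_iff]
      have hre : (-(τ:ℂ) * s).re = -(τ * s.re) := by simp [Complex.mul_re]
      rw [hre]
      nlinarith
    nlinarith [norm_nonneg (Complex.exp (-(τ : ℂ) * s)), abs_nonneg (ρ * q), h1 ▸ norm_nonneg (ρ * q : ℂ)]
  have habsB : ‖(K * q : ℂ) * Complex.exp (-((τ : ℂ) + δ) * s)‖ ≤ |K * q| := by
    rw [norm_mul]
    have h1 : ‖(K * q : ℂ)‖ = |K * q| := by
      rw [show ((K : ℂ) * q) = ((K * q : ℝ) : ℂ) by push_cast; ring, Complex.norm_real, Real.norm_eq_abs]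
    have h2 : ‖Complex.exp (-((τ : ℂ) + δ) * s)‖ ≤ 1 := by
      rw [show -((τ : ℂ) + δ) * s = -(((τ + δ : ℝ) : ℂ)) * s by push_cast; ring]
      rw [Complex.norm_exp, Real.exp_le_one_iff]
      have hre : (-((τ + δ : ℝ):ℂ) * s).re = -((τ + δ) * s.re) := by
        simp [Complex.mul_re]; ring
      rw [hre]
      nlinarith
    nlinarith [norm_nonneg (Complex.exp (-((τ : ℂ) + δ) * s)), abs_nonneg (K * q)]
  -- assemble
  set A := (ρ * q : ℂ) * Complex.exp (-(τ : ℂ) * s) with hA_def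
  set B := (K * q : ℂ) * Complex.exp (-((τ : ℂ) + δ) * s) with hB_def
  set I' := ∫ ξ in Set.Icc (0:ℝ) τ,
      (N ξ : ℂ) * (Complex.exp (-(ξ : ℂ) * s) - Complex.exp (-((ξ : ℂ) + δ) * s)) with hI_def
  have hIabs : ‖I'‖ ≤ D := by
    have hx := hIbound
    rw [← step4, ← step3, ← step2, ← step1] at hx
    exact hx
  have hsum : ‖A - B + I'‖ ≤ |ρ * q| + |K * q| + D := by
    calc ‖A - B + I'‖ ≤ ‖A - B‖ + ‖I'‖ :=
          norm_add_le _ _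
      _ ≤ (‖A‖ + ‖B‖) + ‖I'‖ := by
          have : ‖A - B‖ ≤ ‖A‖ + ‖B‖ :=
            norm_sub_le A B
          linarith
      _ ≤ |ρ * q| + |K * q| + D := by linarith
  have hlow : 1 - ‖A - B + I'‖ ≤ ‖1 - A + B - I'‖ := by
    have h1 : (1 : ℂ) - A + B - I' = 1 - (A - B + I') := by ring
    rw [h1]
    have := norm_sub_norm_le (1 : ℂ) (A - B + I')
    simpa using this
  have : |ρ * q| + |K * q| + D < 1 := by
    simp only [hc_def] at hD
    linarith
  linarith
end

section
/- Let F: ℂ → ℂ be defined by F(s) = 1 − Σ_{k=0}^m a_k·e^{−τ_k s} with a_k ∈ ℂ and τ_k > 0, and let H: ℂ → ℂ be holomorphic on a neighborhood of the closed right half-plane with |H(s)| → 0 as |s| → ∞. Suppose there exists σ > 0 such that F has infinitely many zeros in the half-plane {Re(s) > σ}, and suppose there exist η > 0 and κ > 0 such that every connected component of the η-neighborhood of the zero set of F meeting {Re(s) > σ} is bounded, contained in {Re(s) > σ/2}, and |F| ≥ κ outside this neighborhood in {Re(s) > σ/2}. Then F + H has infinitely many zeros with strictly positive real part. -/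
open Complex

theorem rouche_perturbation_quasipolynomial
    (m : ℕ) (a : Fin (m + 1) → ℂ) (τ : Fin (m + 1) → ℝ) (hτ : ∀ k, τ k > 0)
    (F H : ℂ → ℂ)
    (hF : ∀ s, F s = 1 - ∑ k : Fin (m + 1), a k * Complex.exp (-(τ k : ℂ) * s))
    (U : Set ℂ) (hUopen : IsOpen U) (hU : {s : ℂ | 0 ≤ s.re} ⊆ U)
    (hH : DifferentiableOn ℂ H U)
    (hHdecay : Filter.Tendsto H (Bornology.cobounded ℂ) (nhds 0))
    (σ : ℝ) (hσ : σ > 0)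
    (hinf : {s : ℂ | F s = 0 ∧ σ < s.re}.Infinite)
    (η κ : ℝ) (hη : η > 0) (hκ : κ > 0)
    (Zη : Set ℂ) (hZη : Zη = {z : ℂ | ∃ s : ℂ, F s = 0 ∧ dist z s < η})
    (hcomp : ∀ z ∈ Zη, σ < z.re →
      Bornology.IsBounded (connectedComponentIn Zη z) ∧
        connectedComponentIn Zη z ⊆ {s : ℂ | σ / 2 < s.re})
    (hlow : ∀ s : ℂ, σ / 2 < s.re → s ∉ Zη → κ ≤ ‖F s‖) :
    {s : ℂ | F s + H s = 0 ∧ 0 < s.re}.Infinite := by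
  classical
  by_contra hfin
  rw [Set.not_infinite] at hfin
  -- F is entire
  have hFdiff : Differentiable ℂ F := by
    have hFeq : F = fun s => 1 - ∑ k : Fin (m + 1), a k * Complex.exp (-(τ k : ℂ) * s) :=
      funext hF
    rw [hFeq]
    refine (differentiable_const _).sub (Differentiable.fun_sum fun k _ => ?_)
    exact (differentiable_id.const_mul _).cexp.const_mul _
  -- F tends to 1 along large real values; in particular F is not identically 0
  have hFne : ∃ t₀ : ℂ, F t₀ ≠ 0 := by
    have hterm : ∀ k : Fin (m + 1),
        Filter.Tendsto (fun t : ℝ => a k * Complex.exp (-(τ k : ℂ) * t))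
          Filter.atTop (nhds 0) := by
      intro k
      rw [tendsto_zero_iff_norm_tendsto_zero]
      have heq : (fun t : ℝ => ‖a k * Complex.exp (-(τ k : ℂ) * t)‖)
          = fun t : ℝ => ‖a k‖ * Real.exp (-(τ k * t)) := by
        funext t
        rw [norm_mul, Complex.norm_exp]
        congr 2
        simp
      rw [heq]
      have h0 : Filter.Tendsto (fun t : ℝ => Real.exp (-(τ k * t))) Filter.atTop (nhds 0) :=
        Real.tendsto_exp_atBot.comp
          (Filter.tendsto_neg_atBot_iff.mpr (Filter.Tendsto.const_mul_atTop (hτ k) Filter.tendsto_id))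
      simpa using h0.const_mul ‖a k‖
    have hsum : Filter.Tendsto
        (fun t : ℝ => ∑ k : Fin (m + 1), a k * Complex.exp (-(τ k : ℂ) * t))
        Filter.atTop (nhds 0) := by
      have := tendsto_finset_sum (Finset.univ : Finset (Fin (m + 1)))
        (fun k _ => hterm k)
      simpa using this
    have hFt : Filter.Tendsto (fun t : ℝ => F (t : ℂ)) Filter.atTop (nhds 1) := by
      have : Filter.Tendsto
          (fun t : ℝ => 1 - ∑ k : Fin (m + 1), a k * Complex.exp (-(τ k : ℂ) * t))
          Filter.atTop (nhds (1 - 0)) := (tendsto_const_nhds).sub hsum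
      simp only [sub_zero] at this
      convert this using 1
      funext t
      exact hF _
    have hev := hFt.eventually_ne (one_ne_zero)
    obtain ⟨t, ht⟩ := hev.exists
    exact ⟨t, ht⟩
  obtain ⟨t₀, ht₀⟩ := hFne
  have hFan : AnalyticOnNhd ℂ F Set.univ :=
    hFdiff.differentiableOn.analyticOnNhd isOpen_univ
  -- zeros of F in a compact set form a finite set
  have hZfin : ∀ K : Set ℂ, IsCompact K → {s : ℂ | F s = 0 ∧ s ∈ K}.Finite := by
    intro K hK
    by_contra hinfK
    have hinfK : {s : ℂ | F s = 0 ∧ s ∈ K}.Infinite := hinfK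
    obtain ⟨x, _, hacc⟩ := hinfK.exists_accPt_of_subset_isCompact hK (fun s hs => hs.2)
    have hfreq : ∃ᶠ z in nhdsWithin x {x}ᶜ, F z = 0 := by
      have h1 : (nhdsWithin x {x}ᶜ ⊓ Filter.principal {s : ℂ | F s = 0 ∧ s ∈ K}).NeBot := hacc
      have h2 : ∃ᶠ z in nhdsWithin x {x}ᶜ, z ∈ {s : ℂ | F s = 0 ∧ s ∈ K} :=
        Filter.frequently_mem_iff_neBot.mpr h1
      exact h2.mono fun z hz => hz.1
    have hzero := hFan.eqOn_zero_of_preconnected_of_frequently_eq_zero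
      isPreconnected_univ (Set.mem_univ x) hfreq
    exact ht₀ (hzero (Set.mem_univ t₀))
  -- Zη is open
  have hZηopen : IsOpen Zη := by
    rw [hZη, Metric.isOpen_iff]
    rintro z ⟨s, hs, hd⟩
    refine ⟨η - dist z s, by linarith, fun y hy => ?_⟩
    rw [Metric.mem_ball] at hy
    exact ⟨s, hs, by have := dist_triangle y z s; linarith⟩
  have hzeroZη : ∀ s : ℂ, F s = 0 → s ∈ Zη := by
    intro s hs
    rw [hZη]
    exact ⟨s, hs, by simpa using hη⟩
  -- balls around zeros are inside the connected component of any of their points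
  have hball : ∀ q w : ℂ, q ∈ Zη → F w = 0 → dist q w < η →
      Metric.ball w η ⊆ connectedComponentIn Zη q := by
    intro q w hq hw hd
    have hsub : Metric.ball w η ⊆ Zη := by
      rw [hZη]; intro y hy; exact ⟨w, hw, Metric.mem_ball.mp hy⟩
    exact (convex_ball w η).isPreconnected.subset_connectedComponentIn
      (Metric.mem_ball.mpr hd) hsub
  -- radius beyond which H is small
  obtain ⟨R₀, hR₀pos, hR₀⟩ : ∃ R₀ : ℝ, 0 < R₀ ∧ ∀ s : ℂ, R₀ ≤ ‖s‖ → ‖H s‖ < κ / 3 := by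
    have hev : ∀ᶠ s in Bornology.cobounded ℂ, ‖H s‖ < κ / 3 := by
      have := hHdecay.eventually (Metric.ball_mem_nhds (0 : ℂ) (by positivity : (0:ℝ) < κ/3))
      filter_upwards [this] with s hs
      simpa [Metric.mem_ball, dist_zero_right] using hs
    have hbdd : Bornology.IsBounded {s : ℂ | ‖H s‖ < κ / 3}ᶜ :=
      Bornology.isBounded_compl_iff.mpr hev
    obtain ⟨r, hr⟩ := hbdd.subset_closedBall 0
    refine ⟨max r 0 + 1, by positivity, fun s hs => ?_⟩
    by_contra hcon
    have hsc : s ∈ Metric.closedBall (0 : ℂ) r := hr (by simpa using hcon)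
    rw [Metric.mem_closedBall, dist_zero_right] at hsc
    have : r ≤ max r 0 := le_max_left _ _
    linarith
  -- zeros of F + H with positive real part lie in a ball
  obtain ⟨rZ, hrZ⟩ := hfin.isBounded.subset_closedBall 0
  set R₂ : ℝ := max R₀ rZ + 1 with hR₂def
  -- choose a zero s₀ of F whose component avoids the ball of radius R₂
  by_cases hsel : ∃ s₀ : ℂ, F s₀ = 0 ∧ σ < s₀.re ∧
      connectedComponentIn Zη s₀ ∩ Metric.closedBall 0 R₂ = ∅
  · obtain ⟨s₀, hs₀0, hs₀re, hVfar⟩ := hsel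
    set V : Set ℂ := connectedComponentIn Zη s₀ with hVdef
    have hs₀Zη : s₀ ∈ Zη := hzeroZη s₀ hs₀0
    have hs₀V : s₀ ∈ V := mem_connectedComponentIn hs₀Zη
    have hVopen : IsOpen V := hZηopen.connectedComponentIn
    obtain ⟨hVbdd, hVsub⟩ := hcomp s₀ hs₀Zη hs₀re
    have hVZη : V ⊆ Zη := connectedComponentIn_subset _ _
    -- closure facts
    have hclosV_re : ∀ x ∈ closure V, σ / 2 ≤ x.re := by
      intro x hx
      have hcl : closure V ⊆ {s : ℂ | σ / 2 ≤ s.re} :=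
        closure_minimal (fun v hv => show σ / 2 ≤ v.re from le_of_lt (hVsub hv))
          (IsClosed.preimage Complex.continuous_re isClosed_Ici)
      exact hcl hx
    have hclosV_far : ∀ x ∈ closure V, R₂ ≤ ‖x‖ := by
      intro x hx
      have hcl : closure V ⊆ (Metric.ball (0 : ℂ) R₂)ᶜ := by
        apply closure_minimal
        · intro v hv hvb
          have : v ∈ connectedComponentIn Zη s₀ ∩ Metric.closedBall 0 R₂ :=
            ⟨hv, Metric.ball_subset_closedBall hvb⟩
          rw [hVfar] at this
          exact this
        · exact Metric.isOpen_ball.isClosed_compl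
      have := hcl hx
      rw [Set.mem_compl_iff, Metric.mem_ball, dist_zero_right, not_lt] at this
      exact this
    have hHsmall : ∀ x ∈ closure V, ‖H x‖ < κ / 3 := by
      intro x hx
      apply hR₀ x
      have h1 := hclosV_far x hx
      have : R₀ ≤ R₂ := by rw [hR₂def]; have := le_max_left R₀ rZ; linarith
      linarith
    have hGne : ∀ x ∈ closure V, F x + H x ≠ 0 := by
      intro x hx hzero
      have hre : 0 < x.re := lt_of_lt_of_le (by linarith) (hclosV_re x hx)
      have hxZ : x ∈ {s : ℂ | F s + H s = 0 ∧ 0 < s.re} := ⟨hzero, hre⟩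
      have := hrZ hxZ
      rw [Metric.mem_closedBall, dist_zero_right] at this
      have h2 := hclosV_far x hx
      have : rZ ≤ max R₀ rZ := le_max_right _ _
      have hR₂x : R₂ ≤ rZ := le_trans h2 ‹‖x‖ ≤ rZ›
      rw [hR₂def] at hR₂x
      linarith
    -- every point of V is within η of a zero whose η-ball lies in V
    have hq : ∀ q ∈ V, ∃ w : ℂ, F w = 0 ∧ dist q w < η ∧ Metric.ball w η ⊆ V := by
      intro q hqV
      have hqZη : q ∈ Zη := hVZη hqV
      have hqZη' := hqZη
      rw [hZη] at hqZη'
      obtain ⟨w, hw0, hwd⟩ := hqZη'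
      refine ⟨w, hw0, hwd, ?_⟩
      have hb := hball q w hqZη hw0 hwd
      rwa [← connectedComponentIn_eq hqV] at hb
    -- the real part of such zeros is at least σ/2 + η
    have hre_zero : ∀ w : ℂ, Metric.ball w η ⊆ V → σ / 2 + η ≤ w.re := by
      intro w hw
      by_contra hlt
      push_neg at hlt
      have hwV : w ∈ V := hw (Metric.mem_ball_self hη)
      have hwre : σ / 2 < w.re := hVsub hwV
      set t : ℝ := (w.re - σ / 2 + η) / 2 with htdef
      have ht1 : 0 < t := by rw [htdef]; linarith
      have ht2 : t < η := by rw [htdef]; linarith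
      have ht3 : w.re - σ / 2 < t := by rw [htdef]; linarith
      have hmem : w - (t : ℂ) ∈ Metric.ball w η := by
        rw [Metric.mem_ball, dist_eq_norm]
        have : w - (t : ℂ) - w = -(t : ℂ) := by ring
        rw [this, norm_neg, Complex.norm_real, Real.norm_eq_abs, _root_.abs_of_nonneg ht1.le]
        exact ht2
      have := hVsub (hw hmem)
      simp only [Set.mem_setOf_eq, Complex.sub_re, Complex.ofReal_re] at this
      linarith
    -- structural lemma: frontier points on the line Re = σ/2 give zeros at distance η
    have hS : ∀ y : ℂ, y ∈ closure V → y.re = σ / 2 → F (y + (η : ℂ)) = 0 := by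
      intro y hycl hyre
      have hT : {w : ℂ | F w = 0 ∧ w ∈ Metric.closedBall y (η + 1)}.Finite :=
        hZfin _ (isCompact_closedBall _ _)
      have hS1 : ∀ ε : ℝ, 0 < ε → ∃ w : ℂ, F w = 0 ∧ σ / 2 + η ≤ w.re ∧ dist y w < η + ε := by
        intro ε hε
        obtain ⟨q, hqV, hqd⟩ := Metric.mem_closure_iff.mp hycl ε hε
        obtain ⟨w, hw0, hwd, hwball⟩ := hq q hqV
        refine ⟨w, hw0, hre_zero w hwball, ?_⟩
        calc dist y w ≤ dist y q + dist q w := dist_triangle _ _ _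
          _ < ε + η := by linarith
          _ = η + ε := by ring
      have hS2 : ∃ w : ℂ, F w = 0 ∧ σ / 2 + η ≤ w.re ∧ dist y w ≤ η := by
        by_contra hcon
        push_neg at hcon
        set T' : Set ℂ := {w : ℂ | (F w = 0 ∧ w ∈ Metric.closedBall y (η + 1)) ∧
          σ / 2 + η ≤ w.re} with hT'def
        have hT'fin : T'.Finite := hT.subset (fun w hw => hw.1)
        have hT'ne : T'.Nonempty := by
          obtain ⟨w, h1, h2, h3⟩ := hS1 1 one_pos
          refine ⟨w, ⟨h1, ?_⟩, h2⟩
          rw [Metric.mem_closedBall, dist_comm]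
          linarith
        obtain ⟨w₀, hw₀mem, hmin⟩ := hT'fin.toFinset.exists_min_image
          (fun w => dist y w) (by rwa [Set.Finite.toFinset_nonempty])
        rw [Set.Finite.mem_toFinset] at hw₀mem
        have hw₀far : η < dist y w₀ := hcon w₀ hw₀mem.1.1 hw₀mem.2
        set ε : ℝ := dist y w₀ - η with hεdef
        have hεpos : 0 < ε := by rw [hεdef]; linarith
        obtain ⟨w, h1, h2, h3⟩ := hS1 (min ε 1) (lt_min hεpos one_pos)
        have hwT' : w ∈ T' := by
          refine ⟨⟨h1, ?_⟩, h2⟩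
          rw [Metric.mem_closedBall, dist_comm]
          have : min ε 1 ≤ 1 := min_le_right _ _
          linarith
        have hmin' := hmin w (Set.Finite.mem_toFinset hT'fin |>.mpr hwT')
        have : dist y w < η + ε := lt_of_lt_of_le h3 (by
          have : min ε 1 ≤ ε := min_le_left _ _
          linarith)
        rw [hεdef] at this
        linarith
      obtain ⟨w, hw0, hwre, hwd⟩ := hS2
      have h1 : η ≤ (w - y).re := by
        rw [Complex.sub_re, hyre]
        linarith
      have h2 : ‖w - y‖ ≤ η := by
        rw [← dist_eq_norm, dist_comm]
        exact hwd
      have h3 : (w - y).re ≤ ‖w - y‖ := by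
        exact Complex.re_le_norm _
      have hre_eq : (w - y).re = η := le_antisymm (h3.trans h2) h1
      have hnorm_eq : ‖w - y‖ = η := le_antisymm h2 (hre_eq ▸ h3)
      have him : (w - y).im = 0 := by
        have hsq : ‖w - y‖ ^ 2 = (w - y).re * (w - y).re + (w - y).im * (w - y).im := by
          rw [Complex.sq_norm, Complex.normSq_apply]
        rw [hnorm_eq, hre_eq] at hsq
        have : (w - y).im * (w - y).im = 0 := by nlinarith
        exact mul_self_eq_zero.mp this
      have hwy : w = y + (η : ℂ) := by
        apply Complex.ext
        · rw [Complex.add_re, Complex.ofReal_re]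
          have : (w - y).re = w.re - y.re := Complex.sub_re _ _
          linarith [hre_eq, this]
        · rw [Complex.add_im, Complex.ofReal_im]
          have : (w - y).im = w.im - y.im := Complex.sub_im _ _
          rw [this] at him
          linarith
      rwa [hwy] at hw0
    -- frontier bound for |F|
    have hfrontV : frontier V = closure V \ V := hVopen.frontier_eq
    have hFfr : ∀ x ∈ frontier V, κ ≤ ‖F x‖ := by
      intro x hx
      rw [hfrontV] at hx
      obtain ⟨hxcl, hxnV⟩ := hx
      have hxre : σ / 2 ≤ x.re := hclosV_re x hxcl
      rcases eq_or_lt_of_le hxre with heq | hlt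
      · -- x.re = σ/2 : show |F x| ≥ κ by contradiction
        by_contra hcon
        push_neg at hcon
        have hFcont : ContinuousAt (fun z => ‖F z‖) x :=
          continuous_norm.continuousAt.comp hFdiff.continuous.continuousAt
        have hev : ∀ᶠ z in nhds x, ‖F z‖ < κ :=
          hFcont.eventually_lt continuousAt_const hcon
        obtain ⟨δ, hδpos, hδ⟩ := Metric.eventually_nhds_iff.mp hev
        -- the right half-disc around x is contained in V
        have hHD : ∀ z : ℂ, dist z x < δ → σ / 2 < z.re → z ∈ V := by
          intro z hzd hzre
          have hHDsub : Metric.ball x δ ∩ {s : ℂ | σ / 2 < s.re} ⊆ Zη := by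
            intro p hp
            by_contra hno
            exact absurd (hlow p hp.2 hno) (not_le.mpr (hδ (Metric.mem_ball.mp hp.1)))
          have hHDconv : Convex ℝ (Metric.ball x δ ∩ {s : ℂ | σ / 2 < s.re}) :=
            (convex_ball _ _).inter (convex_halfSpace_re_gt _)
          obtain ⟨p, hpV, hpd⟩ := Metric.mem_closure_iff.mp hxcl δ hδpos
          have hpHD : p ∈ Metric.ball x δ ∩ {s : ℂ | σ / 2 < s.re} :=
            ⟨Metric.mem_ball.mpr (by rwa [dist_comm]), hVsub hpV⟩
          have hsubV := hHDconv.isPreconnected.subset_connectedComponentIn hpHD hHDsub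
          rw [← connectedComponentIn_eq hpV] at hsubV
          exact hsubV ⟨Metric.mem_ball.mpr hzd, hzre⟩
        -- points x + t i for 0 < t < δ/2 are in the closure of V, on the line Re = σ/2
        have hline : ∀ t : ℝ, 0 < t → t < δ / 2 →
            F (x + (t : ℂ) * Complex.I + (η : ℂ)) = 0 := by
          intro t ht1 ht2
          have hcl2 : x + (t : ℂ) * Complex.I ∈ closure V := by
            rw [Metric.mem_closure_iff]
            intro ε hε
            set sε : ℝ := min (ε / 2) (δ / 4) with hsεdef
            have hsε : 0 < sε := lt_min (by linarith) (by linarith)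
            refine ⟨x + (t : ℂ) * Complex.I + (sε : ℂ), hHD _ ?_ ?_, ?_⟩
            · have heq1 : dist (x + (t : ℂ) * Complex.I + (sε : ℂ)) x
                  = ‖(t : ℂ) * Complex.I + (sε : ℂ)‖ := by
                rw [dist_eq_norm]; ring_nf
              rw [heq1]
              have hle : ‖(t : ℂ) * Complex.I + (sε : ℂ)‖ ≤ t + sε := by
                refine (norm_add_le _ _).trans ?_
                rw [norm_mul, Complex.norm_I, mul_one, Complex.norm_real,
                  Complex.norm_real, Real.norm_eq_abs, Real.norm_eq_abs,
                  _root_.abs_of_nonneg ht1.le, _root_.abs_of_nonneg hsε.le]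
              have : sε ≤ δ / 4 := min_le_right _ _
              linarith
            · simp only [Complex.add_re, Complex.mul_re, Complex.I_re, Complex.I_im,
                Complex.ofReal_re, Complex.ofReal_im]
              rw [← heq]
              ring_nf
              nlinarith [hsε]
            · have heq2 : dist (x + (t : ℂ) * Complex.I)
                  (x + (t : ℂ) * Complex.I + (sε : ℂ)) = ‖(sε : ℂ)‖ := by
                rw [dist_eq_norm]
                have : x + (t : ℂ) * Complex.I - (x + (t : ℂ) * Complex.I + (sε : ℂ))
                    = -(sε : ℂ) := by ring
                rw [this, norm_neg]
              rw [heq2, Complex.norm_real, Real.norm_eq_abs, _root_.abs_of_nonneg hsε.le]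
              have : sε ≤ ε / 2 := min_le_left _ _
              linarith
          have hre2 : (x + (t : ℂ) * Complex.I).re = σ / 2 := by
            simp only [Complex.add_re, Complex.mul_re, Complex.I_re, Complex.I_im,
              Complex.ofReal_re, Complex.ofReal_im]
            rw [← heq]; ring
          exact hS _ hcl2 hre2
        -- this gives infinitely many zeros of F in a compact set: contradiction
        have hinj : Set.InjOn (fun t : ℝ => x + (t : ℂ) * Complex.I + (η : ℂ))
            (Set.Ioo 0 (δ / 2)) := by
          intro t1 _ t2 _ hteq
          have him := congrArg Complex.im hteq
          simpa using him
        have himg : (fun t : ℝ => x + (t : ℂ) * Complex.I + (η : ℂ)) '' (Set.Ioo 0 (δ / 2))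
            ⊆ {s : ℂ | F s = 0 ∧ s ∈ Metric.closedBall x (δ + η)} := by
          rintro z ⟨t, ht, rfl⟩
          refine ⟨hline t ht.1 ht.2, ?_⟩
          rw [Metric.mem_closedBall]
          have heq1 : dist (x + (t : ℂ) * Complex.I + (η : ℂ)) x
              = ‖(t : ℂ) * Complex.I + (η : ℂ)‖ := by
            rw [dist_eq_norm]; ring_nf
          rw [heq1]
          have hle : ‖(t : ℂ) * Complex.I + (η : ℂ)‖ ≤ t + η := by
            refine (norm_add_le _ _).trans ?_
            rw [norm_mul, Complex.norm_I, mul_one, Complex.norm_real,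
              Complex.norm_real, Real.norm_eq_abs, Real.norm_eq_abs,
              _root_.abs_of_nonneg ht.1.le, _root_.abs_of_nonneg hη.le]
          have := ht.2
          linarith
        have hinf2 : {s : ℂ | F s = 0 ∧ s ∈ Metric.closedBall x (δ + η)}.Infinite :=
          Set.Infinite.mono himg ((Set.Ioo_infinite (by linarith)).image hinj)
        exact hinf2 (hZfin _ (isCompact_closedBall _ _))
      · -- σ/2 < x.re : use hlow; x ∉ Zη since x is a frontier point
        apply hlow x hlt
        intro hxZ
        have hopen : connectedComponentIn Zη x ∈ nhds x :=
          (hZηopen.connectedComponentIn).mem_nhds (mem_connectedComponentIn hxZ)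
        obtain ⟨p, hp1, hp2⟩ := (mem_closure_iff_nhds.mp hxcl _ hopen)
        have heq1 : connectedComponentIn Zη x = connectedComponentIn Zη p :=
          connectedComponentIn_eq hp1
        have heq2 : V = connectedComponentIn Zη p := connectedComponentIn_eq hp2
        have : x ∈ V := by
          rw [heq2, ← heq1]
          exact mem_connectedComponentIn hxZ
        exact hxnV this
    -- setup for the maximum modulus principle
    set G : ℂ → ℂ := fun s => F s + H s with hGdef
    set φ : ℂ → ℂ := fun s => H s / G s with hφdef
    set O : Set ℂ := U ∩ G ⁻¹' {0}ᶜ with hOdef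
    have hGcont : ContinuousOn G U :=
      (hFdiff.continuous.continuousOn).add hH.continuousOn
    have hOopen : IsOpen O :=
      hGcont.isOpen_inter_preimage hUopen isOpen_compl_singleton
    have hclosO : closure V ⊆ O := by
      intro x hx
      refine ⟨hU ?_, ?_⟩
      · have := hclosV_re x hx
        exact Set.mem_setOf_eq ▸ (by linarith : (0:ℝ) ≤ x.re)
      · simp only [Set.mem_preimage, Set.mem_compl_iff, Set.mem_singleton_iff]
        exact hGne x hx
    have hφdiffO : DifferentiableOn ℂ φ O := by
      apply DifferentiableOn.div
      · exact hH.mono (Set.inter_subset_left)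
      · exact (hFdiff.differentiableOn).add (hH.mono (Set.inter_subset_left))
      · intro x hx
        exact hx.2
    have hdcc : DiffContOnCl ℂ φ V := by
      apply DifferentiableOn.diffContOnCl
      exact hφdiffO.mono hclosO
    have hfrbound : ∀ z ∈ frontier V, ‖φ z‖ ≤ 1 / 2 := by
      intro z hz
      have hzcl : z ∈ closure V := frontier_subset_closure hz
      have hF2 : κ ≤ ‖F z‖ := hFfr z hz
      have hH2 : ‖H z‖ < κ / 3 := hHsmall z hzcl
      have hG2 : 2 * κ / 3 ≤ ‖G z‖ := by
        have h1 : ‖F z‖ ≤ ‖G z‖ + ‖H z‖ := by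
          have : F z = G z - H z := by rw [hGdef]; ring
          rw [this]
          exact norm_sub_le _ _
        linarith
      have hG2pos : 0 < ‖G z‖ := by linarith
      rw [hφdef]
      simp only [norm_div]
      rw [div_le_iff₀ hG2pos]
      linarith
    have hφs₀ : ‖φ s₀‖ = 1 := by
      have hGs₀ : G s₀ ≠ 0 := hGne s₀ (subset_closure hs₀V)
      have hHs₀ : H s₀ = G s₀ := by rw [hGdef]; simp [hs₀0]
      rw [hφdef]
      simp only
      rw [hHs₀, div_self hGs₀, norm_one]
    have hmax := Complex.norm_le_of_forall_mem_frontier_norm_le hVbdd hdcc hfrbound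
      (subset_closure hs₀V)
    rw [hφs₀] at hmax
    linarith
  · -- no such zero: all components meet the ball; then all zeros lie in a bounded set
    push_neg at hsel
    have hcover : {s : ℂ | F s = 0 ∧ σ < s.re} ⊆
        ⋃ w ∈ {w : ℂ | (F w = 0 ∧ w ∈ Metric.closedBall (0:ℂ) (R₂ + η)) ∧
          Bornology.IsBounded (connectedComponentIn Zη w)}, connectedComponentIn Zη w := by
      rintro z ⟨hz0, hzre⟩
      have hzZη : z ∈ Zη := hzeroZη z hz0
      have hne := hsel z hz0 hzre
      obtain ⟨p, hpV, hpB⟩ := hne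
      have hpZη : p ∈ Zη := connectedComponentIn_subset Zη z hpV
      have hpZη' := hpZη
      rw [hZη] at hpZη'
      obtain ⟨w, hw0, hwd⟩ := hpZη'
      have hbw := hball p w hpZη hw0 hwd
      have heqpz : connectedComponentIn Zη z = connectedComponentIn Zη p :=
        connectedComponentIn_eq hpV
      have hwz : w ∈ connectedComponentIn Zη z := by
        rw [heqpz]
        exact hbw (Metric.mem_ball_self hη)
      have heqwz : connectedComponentIn Zη z = connectedComponentIn Zη w :=
        connectedComponentIn_eq hwz
      have hwball : w ∈ Metric.closedBall (0:ℂ) (R₂ + η) := by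
        rw [Metric.mem_closedBall]
        have h1 : dist w 0 ≤ dist w p + dist p 0 := dist_triangle _ _ _
        have h2 : dist p 0 ≤ R₂ := Metric.mem_closedBall.mp hpB
        have h3 : dist w p < η := by rwa [dist_comm]
        linarith
      have hbdd : Bornology.IsBounded (connectedComponentIn Zη w) := by
        rw [← heqwz]
        exact (hcomp z hzZη hzre).1
      refine Set.mem_biUnion ⟨⟨hw0, hwball⟩, hbdd⟩ ?_
      rw [← heqwz]
      exact mem_connectedComponentIn hzZη
    have hTfin : {w : ℂ | (F w = 0 ∧ w ∈ Metric.closedBall (0:ℂ) (R₂ + η)) ∧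
        Bornology.IsBounded (connectedComponentIn Zη w)}.Finite :=
      (hZfin (Metric.closedBall (0:ℂ) (R₂ + η)) (isCompact_closedBall _ _)).subset
        (fun w hw => hw.1)
    have hbddU : Bornology.IsBounded
        (⋃ w ∈ {w : ℂ | (F w = 0 ∧ w ∈ Metric.closedBall (0:ℂ) (R₂ + η)) ∧
          Bornology.IsBounded (connectedComponentIn Zη w)}, connectedComponentIn Zη w) :=
      (Bornology.isBounded_biUnion hTfin).2 (fun w hw => hw.2)
    have hWbdd : Bornology.IsBounded {s : ℂ | F s = 0 ∧ σ < s.re} :=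
      hbddU.subset hcover
    obtain ⟨r₃, hr₃⟩ := hWbdd.subset_closedBall 0
    have hWfin : {s : ℂ | F s = 0 ∧ σ < s.re}.Finite := by
      apply (hZfin (Metric.closedBall 0 r₃) (isCompact_closedBall _ _)).subset
      intro s hs
      exact ⟨hs.1, hr₃ hs⟩
    exact hinf hWfin
end
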